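/- If V and W are finite-dimensional irreducible complex G-representations with Hom_G(V, L) ≠ 0 and Hom_G(W, L) ≠ 0, and Hom_G(V, L) and Hom_G(W, L) are isomorphic as A^G-modules, then V and W are isomorphic as G-representations. (Abstract Frobenius decomposition, Theorem 2.2, part 2: multiplicity spaces for distinct isotypes are pairwise non-isomorphic A^G-modules.) -/

import Mathlib

/-- Conjugation action of a group element on endomorphisms of `L`:
`g · T := ρ(g) ∘ T ∘ ρ(g)⁻¹`. -/
def conjEnd {G L : Type*} [Group G] [AddCommGroup L] [Module ℂ L]
    (ρ : Representation ℂ G L) (g : G) :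
    Module.End ℂ L →ₗ[ℂ] Module.End ℂ L where
  toFun T := ρ g ∘ₗ T ∘ₗ ρ g⁻¹
  map_add' T S := by ext v; simp
  map_smul' c T := by ext v; simp

/-- The space `Hom_G(V, L)` of `G`-equivariant linear maps `V →ₗ[ℂ] L`. -/
def homG {G L V : Type*} [Group G] [AddCommGroup L] [Module ℂ L]
    [AddCommGroup V] [Module ℂ V]
    (ρ : Representation ℂ G L) (π : Representation ℂ G V) :
    Submodule ℂ (V →ₗ[ℂ] L) where
  carrier := {T | ∀ g : G, T ∘ₗ π g = ρ g ∘ₗ T}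
  add_mem' := by
    intro T S hT hS g
    rw [LinearMap.add_comp, LinearMap.comp_add, hT g, hS g]
  zero_mem' := by
    intro g
    rw [LinearMap.zero_comp, LinearMap.comp_zero]
  smul_mem' := by
    intro c T hT g
    rw [LinearMap.smul_comp, LinearMap.comp_smul, hT g]

section AuxFrobenius

open Cardinal Polynomial

lemma AuxFrob.dixmier {L : Type*} [AddCommGroup L] [Module ℂ L] [Nontrivial L]
    (hrank : Module.rank ℂ L ≤ ℵ₀)
    (A : Subalgebra ℂ (Module.End ℂ L))
    (hAirr : ∀ p : Submodule ℂ L, (∀ T ∈ A, ∀ x ∈ p, T x ∈ p) → p = ⊥ ∨ p = ⊤)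
    (f : Module.End ℂ L) (hf : ∀ a ∈ A, f * a = a * f) :
    ∃ c : ℂ, f = c • 1 := by
  by_contra hcon
  push_neg at hcon
  have hne : ∀ c : ℂ, f - c • 1 ≠ 0 := fun c h => hcon c (by rwa [sub_eq_zero] at h)
  have hcomm : ∀ c : ℂ, ∀ a ∈ A, (f - c • 1) * a = a * (f - c • 1) := by
    intro c a ha
    rw [sub_mul, mul_sub, hf a ha, smul_mul_assoc, mul_smul_comm, one_mul, mul_one]
  have hker : ∀ c : ℂ, LinearMap.ker (f - c • 1) = ⊥ := by
    intro c
    have hinv : ∀ a ∈ A, ∀ x ∈ LinearMap.ker (f - c • 1), a x ∈ LinearMap.ker (f - c • 1) := by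
      intro a ha x hx
      have : ((f - c • 1) * a) x = 0 := by
        rw [hcomm c a ha, Module.End.mul_apply, LinearMap.mem_ker.mp hx, map_zero]
      simpa [LinearMap.mem_ker, Module.End.mul_apply] using this
    rcases hAirr _ hinv with h | h
    · exact h
    · exact absurd (LinearMap.ker_eq_top.mp h) (hne c)
  have hrange : ∀ c : ℂ, LinearMap.range (f - c • 1) = ⊤ := by
    intro c
    have hinv : ∀ a ∈ A, ∀ x ∈ LinearMap.range (f - c • 1), a x ∈ LinearMap.range (f - c • 1) := by
      intro a ha x hx
      obtain ⟨y, rfl⟩ := hx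
      exact ⟨a y, by rw [← Module.End.mul_apply, hcomm c a ha, Module.End.mul_apply]⟩
    rcases hAirr _ hinv with h | h
    · exact absurd (LinearMap.range_eq_bot.mp h) (hne c)
    · exact h
  have hbij : ∀ c : ℂ, Function.Bijective (⇑(f - c • (1 : Module.End ℂ L))) :=
    fun c => ⟨LinearMap.ker_eq_bot.mp (hker c), LinearMap.range_eq_top.mp (hrange c)⟩
  obtain ⟨v, hv⟩ := exists_ne (0 : L)
  let E : ℂ → (L ≃ₗ[ℂ] L) := fun c => LinearEquiv.ofBijective (f - c • 1) (hbij c)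
  let w : ℂ → L := fun c => (E c).symm v
  have hw : ∀ c : ℂ, (f - c • 1 : Module.End ℂ L) (w c) = v := fun c => (E c).apply_symm_apply v
  -- aeval f of X - C r
  have haev : ∀ r : ℂ, aeval f (X - C r) = f - r • 1 := by
    intro r
    rw [map_sub, aeval_X, aeval_C, Module.algebraMap_end_eq_smul_id]
    rfl
  -- injectivity of aeval f q for nonzero q
  have hinjM : ∀ s : Multiset ℂ, Function.Injective (aeval f ((s.map fun r => X - C r).prod)) := by
    intro s
    induction s using Multiset.induction_on with
    | empty => intro x y h; simpa using h
    | cons r t ih =>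
      rw [Multiset.map_cons, Multiset.prod_cons, map_mul, haev]
      have h1 : Function.Injective (⇑(f - r • (1 : Module.End ℂ L))) :=
        LinearMap.ker_eq_bot.mp (hker r)
      intro x y h
      exact ih (h1 h)
  have hinj : ∀ q : ℂ[X], q ≠ 0 → Function.Injective (aeval f q) := by
    intro q hq
    have hsp := Splits.eq_prod_roots (IsAlgClosed.splits q)
    rw [hsp, map_mul, aeval_C]
    have h2 := hinjM q.roots
    have hlc : q.leadingCoeff ≠ 0 := leadingCoeff_ne_zero.mpr hq
    have h1 : Function.Injective (⇑(algebraMap ℂ (Module.End ℂ L) q.leadingCoeff)) := by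
      intro x y h
      have hx : q.leadingCoeff • x = q.leadingCoeff • y := by
        simpa [Module.algebraMap_end_apply] using h
      exact smul_right_injective L hlc hx
    intro x y h
    exact h2 (h1 h)
  -- linear independence of w
  have hli : LinearIndependent ℂ w := by
    rw [linearIndependent_iff']
    intro s a hsum i hi
    by_contra hai
    set Q : ℂ → ℂ[X] := fun c => ∏ c' ∈ s.erase c, (X - C c') with hQ
    set P : ℂ[X] := ∏ c' ∈ s, (X - C c') with hP
    have hPQ : ∀ c ∈ s, P = (X - C c) * Q c := fun c hc => (Finset.mul_prod_erase s _ hc).symm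
    have hPapp : ∀ c ∈ s, aeval f P (w c) = aeval f (Q c) v := by
      intro c hc
      rw [hPQ c hc, mul_comm (X - C c) (Q c), map_mul, Module.End.mul_apply, haev, hw]
    have h1 : (0 : L) = ∑ c ∈ s, a c • (aeval f (Q c)) v := by
      calc (0 : L) = aeval f P (∑ c ∈ s, a c • w c) := by rw [hsum, map_zero]
        _ = ∑ c ∈ s, a c • (aeval f (Q c)) v := by
            rw [map_sum]
            exact Finset.sum_congr rfl fun c hc => by rw [map_smul, hPapp c hc]
    have h0 : (aeval f (∑ c ∈ s, C (a c) * Q c)) v = 0 := by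
      rw [map_sum, LinearMap.sum_apply]
      rw [show ∑ c ∈ s, (aeval f (C (a c) * Q c)) v
            = ∑ c ∈ s, a c • (aeval f (Q c)) v from
          Finset.sum_congr rfl fun c _ => by
            rw [map_mul, aeval_C, Module.End.mul_apply, Module.algebraMap_end_apply]]
      exact h1.symm
    have hpne : (∑ c ∈ s, C (a c) * Q c) ≠ 0 := by
      intro h
      have heval : Polynomial.eval i (∑ c ∈ s, C (a c) * Q c)
          = a i * ∏ c' ∈ s.erase i, (i - c') := by
        rw [Polynomial.eval_finset_sum, Finset.sum_eq_single i]
        · rw [eval_mul, eval_C, hQ, eval_prod]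
          simp
        · intro c hc hne2
          rw [eval_mul, hQ]
          have hz : Polynomial.eval i (∏ c' ∈ s.erase c, (X - C c')) = 0 := by
            rw [eval_prod]
            refine Finset.prod_eq_zero (Finset.mem_erase.mpr ⟨(Ne.symm hne2), hi⟩) ?_
            simp
          rw [hz, mul_zero]
        · intro h2
          exact absurd hi h2
      rw [h, Polynomial.eval_zero] at heval
      have hprod : (∏ c' ∈ s.erase i, (i - c')) ≠ 0 := by
        rw [Finset.prod_ne_zero_iff]
        intro c' hc'
        have : c' ≠ i := (Finset.mem_erase.mp hc').1
        exact sub_ne_zero.mpr (Ne.symm this)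
      exact hai (by
        rcases mul_eq_zero.mp heval.symm with h' | h'
        · exact h'
        · exact absurd h' hprod)
    exact hv (hinj _ hpne (by rw [h0, map_zero]))
  have hcard := hli.cardinal_lift_le_rank
  rw [mk_complex, lift_continuum] at hcard
  exact absurd (hcard.trans ((lift_le.mpr hrank).trans (by simp))) aleph0_lt_continuum.not_ge

set_option synthInstance.maxHeartbeats 1000000 in
set_option maxHeartbeats 1000000 in
lemma AuxFrob.density {L : Type*} [AddCommGroup L] [Module ℂ L] [Nontrivial L]
    (hrank : Module.rank ℂ L ≤ ℵ₀)
    (A : Subalgebra ℂ (Module.End ℂ L))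
    (hAirr : ∀ p : Submodule ℂ L, (∀ T ∈ A, ∀ x ∈ p, T x ∈ p) → p = ⊥ ∨ p = ⊤)
    {ι : Type} [Fintype ι] [DecidableEq ι] (y : ι → L) (φ : Module.End ℂ L) :
    ∃ D ∈ A, ∀ i, D (y i) = φ (y i) := by
  letI : Module ↥A L := Module.compHom L (Subalgebra.val A).toRingHom
  have hsmul : ∀ (a : ↥A) (x : L), a • x = (a : Module.End ℂ L) x := fun a x => rfl
  have hCsmul : ∀ (c : ℂ) (x : L), (algebraMap ℂ ↥A c) • x = c • x := fun c x => rfl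
  -- L is a simple A-module
  haveI : IsSimpleModule ↥A L := by
    haveI : Nontrivial (Submodule ↥A L) := Submodule.nontrivial_iff ↥A |>.mpr inferInstance
    refine IsSimpleModule.mk (toIsSimpleOrder := ?_); constructor
    intro p
    let p' : Submodule ℂ L :=
      { carrier := (p : Set L)
        add_mem' := fun ha hb => p.add_mem ha hb
        zero_mem' := p.zero_mem
        smul_mem' := fun c x hx => by
          have := p.smul_mem (algebraMap ℂ ↥A c) hx
          exact this }
    have hinv : ∀ T ∈ A, ∀ x ∈ p', T x ∈ p' := by
      intro T hT x hx
      have := p.smul_mem (⟨T, hT⟩ : ↥A) hx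
      exact this
    rcases hAirr p' hinv with h | h
    · left
      ext x
      have : x ∈ p' ↔ x ∈ (⊥ : Submodule ℂ L) := by rw [h]
      exact this
    · right
      ext x
      have : x ∈ p' ↔ x ∈ (⊤ : Submodule ℂ L) := by rw [h]
      exact this
  haveI : IsSemisimpleModule ↥A L := by
    apply IsSemisimpleModule.of_sSup_simples_eq_top
    apply top_unique
    have h : IsSimpleModule ↥A (⊤ : Submodule ↥A L) :=
      IsSimpleModule.congr (Submodule.topEquiv (R := ↥A) (M := L))
    exact le_sSup h
  haveI : IsSemisimpleModule ↥A (ι → L) := by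
    apply isSemisimpleModule_of_isSemisimpleModule_submodule'
      (p := fun i => LinearMap.range (LinearMap.single ↥A (fun _ : ι => L) i))
    · intro i
      exact IsSemisimpleModule.congr
        (LinearEquiv.ofInjective (LinearMap.single ↥A (fun _ : ι => L) i)
          (Pi.single_injective (M := fun _ : ι => L) i)).symm
    · exact LinearMap.iSup_range_single ↥A (fun _ : ι => L)
  -- the orbit submodule
  let mk : ↥A →ₗ[↥A] (ι → L) :=
    { toFun := fun a => fun i => a • y i
      map_add' := fun a b => funext fun i => add_smul a b (y i)
      map_smul' := fun b a => funext fun i => mul_smul b a (y i) }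
  let N := LinearMap.range mk
  obtain ⟨q, hq⟩ := exists_isCompl N
  let Pr : (ι → L) →ₗ[↥A] (ι → L) := N.subtype.comp (N.projectionOnto q hq)
  have hPrN : ∀ z : ι → L, Pr z ∈ N := fun z => Submodule.coe_mem _
  have hPrid : ∀ z ∈ N, Pr z = z := by
    intro z hz
    show (N.subtype (N.projectionOnto q hq z)) = z
    rw [show z = ((⟨z, hz⟩ : N) : ι → L) from rfl,
      Submodule.projectionOnto_apply_left hq]
    rfl
  -- single as A-linear gadget
  have hsingle : ∀ (a : ↥A) (j : ι) (x : L), Pi.single j (a • x) = a • (Pi.single j x : ι → L) := by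
    intro a j x
    funext k
    by_cases hk : k = j
    · subst hk; simp [Pi.single_apply]
    · simp [Pi.single_apply, hk]
  -- matrix entries
  let eop : ι → ι → Module.End ℂ L := fun i j =>
    { toFun := fun x => Pr (Pi.single j x) i
      map_add' := fun x z => by
        show Pr (Pi.single j (x + z)) i = Pr (Pi.single j x) i + Pr (Pi.single j z) i
        rw [Pi.single_add, map_add, Pi.add_apply]
      map_smul' := fun c x => by
        show Pr (Pi.single j (c • x)) i = c • Pr (Pi.single j x) i
        have h1 : Pi.single j (c • x) = (algebraMap ℂ ↥A c) • (Pi.single j x : ι → L) := by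
          rw [← hsingle, hCsmul]
        rw [h1, map_smul, Pi.smul_apply, hCsmul] }
  have heopA : ∀ i j, ∀ a ∈ A, eop i j * a = a * eop i j := by
    intro i j a ha
    ext x
    show Pr (Pi.single j (a x)) i = a (Pr (Pi.single j x) i)
    rw [← hsmul (⟨a, ha⟩ : ↥A), ← hsmul (⟨a, ha⟩ : ↥A), hsingle, map_smul]
    rfl
  have hc : ∀ i j, ∃ c : ℂ, eop i j = c • 1 :=
    fun i j => AuxFrob.dixmier hrank A hAirr (eop i j) (heopA i j)
  choose c hcc using fun i => hc i
  have hPr : ∀ (z : ι → L) (i : ι), Pr z i = ∑ j, c i j • z j := by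
    intro z i
    have hz : z = ∑ j, Pi.single j (z j) := (Finset.univ_sum_single z).symm
    calc Pr z i = (∑ j, Pr (Pi.single j (z j))) i := by rw [← map_sum, ← hz]
      _ = ∑ j, Pr (Pi.single j (z j)) i := by rw [Finset.sum_apply]
      _ = ∑ j, c i j • z j := by
          refine Finset.sum_congr rfl fun j _ => ?_
          have : Pr (Pi.single j (z j)) i = eop i j (z j) := rfl
          rw [this, hcc i j]
          simp
  have hyN : (fun i => y i) ∈ N := ⟨1, funext fun i => one_smul _ _⟩
  have hPry : ∀ i, Pr (fun i => y i) i = y i := fun i => by rw [hPrid _ hyN]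
  have hZ : Pr (fun i => φ (y i)) = fun i => φ (y i) := by
    funext i
    rw [hPr]
    calc ∑ j, c i j • φ (y j) = φ (∑ j, c i j • y j) := by rw [map_sum]; simp
      _ = φ (Pr (fun i => y i) i) := by rw [hPr]
      _ = φ (y i) := by rw [hPry]
  have hZN : (fun i => φ (y i)) ∈ N := by rw [← hZ]; exact hPrN _
  obtain ⟨a, hay⟩ := hZN
  exact ⟨(a : Module.End ℂ L), a.2, fun i => by
    rw [← hsmul]
    exact congrFun hay i⟩

end AuxFrobenius

/-- **Abstract Frobenius decomposition, Theorem 2.2, part 2.**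
Under the standing hypotheses on `G`, `L` and `A`, if `V` and `W` are
finite-dimensional irreducible complex `G`-representations whose multiplicity
spaces `Hom_G(V, L)` and `Hom_G(W, L)` are nonzero and isomorphic as
`A^G`-modules, then `V` and `W` are isomorphic as `G`-representations. -/
theorem multiplicity_spaces_pairwise_nonisomorphic
    {G L : Type*} [Group G] [AddCommGroup L] [Module ℂ L]
    (ρ : Representation ℂ G L)
    -- `L` has countable dimension
    (hcount : ∃ s : Set L, s.Countable ∧ Submodule.span ℂ s = ⊤)
    -- the `G`-action on `L` is locally finite
    (hlocfin : ∀ v : L, ∃ Y : Submodule ℂ L,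
      (∀ g : G, ∀ y ∈ Y, ρ g y ∈ Y) ∧ FiniteDimensional ℂ Y ∧ v ∈ Y)
    -- the `G`-action on `L` is completely reducible
    (hcompred : ∀ p : Submodule ℂ L, (∀ g : G, ∀ y ∈ p, ρ g y ∈ p) →
      ∃ q : Submodule ℂ L, (∀ g : G, ∀ y ∈ q, ρ g y ∈ q) ∧ IsCompl p q)
    (A : Subalgebra ℂ (Module.End ℂ L))
    -- `A` acts irreducibly on `L`
    (hAirr : ∀ p : Submodule ℂ L, (∀ T ∈ A, ∀ x ∈ p, T x ∈ p) → p = ⊥ ∨ p = ⊤)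
    -- `A` is invariant under the conjugation `G`-action
    (hAG : ∀ g : G, ∀ T ∈ A, conjEnd ρ g T ∈ A)
    -- the `G`-action on `A` is locally finite
    (hAlocfin : ∀ T ∈ A, ∃ E : Submodule ℂ (Module.End ℂ L),
      E ≤ Subalgebra.toSubmodule A ∧ (∀ g : G, ∀ S ∈ E, conjEnd ρ g S ∈ E) ∧
      FiniteDimensional ℂ E ∧ T ∈ E)
    -- the `G`-action on `A` is completely reducible
    (hAcompred : ∀ p : Submodule ℂ (Module.End ℂ L),
      p ≤ Subalgebra.toSubmodule A → (∀ g : G, ∀ S ∈ p, conjEnd ρ g S ∈ p) →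
      ∃ q : Submodule ℂ (Module.End ℂ L), q ≤ Subalgebra.toSubmodule A ∧
        (∀ g : G, ∀ S ∈ q, conjEnd ρ g S ∈ q) ∧
        p ⊓ q = ⊥ ∧ p ⊔ q = Subalgebra.toSubmodule A)
    -- `(π, V)` and `(π', V')` are finite-dimensional irreducible `G`-representations
    {V : Type*} [AddCommGroup V] [Module ℂ V] [FiniteDimensional ℂ V]
    (π : Representation ℂ G V)
    (hVirr : ∀ p : Submodule ℂ V, (∀ g : G, ∀ v ∈ p, π g v ∈ p) → p = ⊥ ∨ p = ⊤)
    {V' : Type*} [AddCommGroup V'] [Module ℂ V'] [FiniteDimensional ℂ V']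
    (π' : Representation ℂ G V')
    (hV'irr : ∀ p : Submodule ℂ V', (∀ g : G, ∀ v ∈ p, π' g v ∈ p) → p = ⊥ ∨ p = ⊤)
    -- both multiplicity spaces are nonzero
    (hne : homG ρ π ≠ ⊥) (hne' : homG ρ π' ≠ ⊥)
    -- `e` is an isomorphism of `A^G`-modules `Hom_G(V, L) ≅ Hom_G(V', L)`
    (e : ↥(homG ρ π) ≃ₗ[ℂ] ↥(homG ρ π'))
    (he : ∀ D ∈ A, (∀ g : G, conjEnd ρ g D = D) →
      ∀ T S : ↥(homG ρ π), (S : V →ₗ[ℂ] L) = D ∘ₗ (T : V →ₗ[ℂ] L) →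
        (e S : V' →ₗ[ℂ] L) = D ∘ₗ (e T : V' →ₗ[ℂ] L)) :
    ∃ u : V ≃ₗ[ℂ] V', ∀ (g : G) (v : V), u (π g v) = π' g (u v) := by
  classical
  -- rank bound
  obtain ⟨s, hsc, hsp⟩ := hcount
  have hrank : Module.rank ℂ L ≤ Cardinal.aleph0 := by
    have h1 := rank_span_le (R := ℂ) s
    rw [hsp, rank_top] at h1
    haveI := hsc.to_subtype
    exact h1.trans (Cardinal.mk_le_aleph0)
  -- a nonzero T in Hom_G(V, L)
  obtain ⟨T, hTmem, hT0⟩ := Submodule.exists_mem_ne_zero_of_ne_bot hne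
  set Ts : ↥(homG ρ π) := ⟨T, hTmem⟩ with hTs
  set T' : V' →ₗ[ℂ] L := (e Ts : V' →ₗ[ℂ] L) with hT'def
  have hT'0 : T' ≠ 0 := by
    intro h
    have : e Ts = 0 := Subtype.ext h
    rw [e.map_eq_zero_iff] at this
    exact hT0 (congrArg Subtype.val this)
  have hTg : ∀ (g : G) (v : V), T (π g v) = ρ g (T v) := by
    intro g v
    simpa using LinearMap.congr_fun (hTmem g) v
  have hT'g : ∀ (g : G) (v' : V'), T' (π' g v') = ρ g (T' v') := by
    intro g v'
    simpa using LinearMap.congr_fun ((e Ts).2 g) v'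
  haveI : Nontrivial L := by
    obtain ⟨v, hv⟩ : ∃ v, T v ≠ 0 := by
      by_contra h
      push_neg at h
      exact hT0 (LinearMap.ext h)
    exact ⟨⟨T v, 0, hv⟩⟩
  have hT'inj : Function.Injective T' := by
    have hkinv : ∀ g : G, ∀ v' ∈ LinearMap.ker T', π' g v' ∈ LinearMap.ker T' := by
      intro g v' hv'
      rw [LinearMap.mem_ker, hT'g, LinearMap.mem_ker.mp hv', map_zero]
    rcases hV'irr _ hkinv with h | h
    · exact LinearMap.ker_eq_bot.mp h
    · exact absurd (LinearMap.ker_eq_top.mp h) hT'0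
  set R : Submodule ℂ L := LinearMap.range T with hRdef
  set R' : Submodule ℂ L := LinearMap.range T' with hR'def
  have hRinv : ∀ g : G, ∀ x ∈ R, ρ g x ∈ R := by
    rintro g x ⟨v, rfl⟩; exact ⟨π g v, (hTg g v)⟩
  have hR'inv : ∀ g : G, ∀ x ∈ R', ρ g x ∈ R' := by
    rintro g x ⟨v', rfl⟩; exact ⟨π' g v', (hT'g g v')⟩
  -- the G-invariant subspace W of V
  set W : Submodule ℂ V := Submodule.comap T R' with hWdef
  have hWinv : ∀ g : G, ∀ v ∈ W, π g v ∈ W := by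
    intro g v hv
    show T (π g v) ∈ R'
    rw [hTg]
    exact hR'inv g _ hv
  rcases hVirr W hWinv with hW | hW
  · -- W = ⊥ : disjoint ranges, derive a contradiction
    exfalso
    have hdisj : ∀ x, x ∈ R → x ∈ R' → x = 0 := by
      rintro x ⟨v, rfl⟩ hx'
      have : v ∈ W := hx'
      rw [hW] at this
      rw [Submodule.mem_bot] at this
      rw [this, map_zero]
    obtain ⟨cpl, hcpl⟩ := Submodule.exists_isCompl (R ⊔ R')
    have hcompl2 : IsCompl R (R' ⊔ cpl) := by
      constructor
      · rw [Submodule.disjoint_def]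
        intro x hxR hx
        obtain ⟨r', hr', w, hw, rfl⟩ := Submodule.mem_sup.mp hx
        have hwmem : w ∈ (R ⊔ R') ⊓ cpl := by
          constructor
          · have h1 : r' + w ∈ R ⊔ R' := Submodule.mem_sup_left hxR
            have h2 : r' ∈ R ⊔ R' := Submodule.mem_sup_right hr'
            have := Submodule.sub_mem _ h1 h2
            simpa using this
          · exact hw
        rw [hcpl.inf_eq_bot, Submodule.mem_bot] at hwmem
        rw [hwmem, add_zero] at hxR ⊢
        exact hdisj r' hxR hr'
      · rw [codisjoint_iff, ← sup_assoc, hcpl.sup_eq_top]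
    set φtot : Module.End ℂ L :=
      R.subtype ∘ₗ (R.projectionOnto (R' ⊔ cpl) hcompl2) with hφdef
    have hφR : ∀ x ∈ R, φtot x = x := by
      intro x hx
      show R.subtype (R.projectionOnto (R' ⊔ cpl) hcompl2 x) = x
      rw [show x = ((⟨x, hx⟩ : R) : L) from rfl,
        Submodule.projectionOnto_apply_left hcompl2]
      rfl
    have hφR' : ∀ x ∈ R', φtot x = 0 := by
      intro x hx
      show R.subtype (R.projectionOnto (R' ⊔ cpl) hcompl2 x) = 0
      rw [Submodule.projectionOnto_apply_of_mem_right hcompl2 (Submodule.mem_sup_left hx)]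
      rfl
    -- density
    set bV := Module.finBasis ℂ V with hbV
    set bV' := Module.finBasis ℂ V' with hbV'
    set ι : Type := Fin (Module.finrank ℂ V) ⊕ Fin (Module.finrank ℂ V') with hι
    set y : ι → L := Sum.elim (fun i => T (bV i)) (fun j => T' (bV' j)) with hy
    obtain ⟨D₀, hD₀A, hD₀⟩ := AuxFrob.density hrank A hAirr y φtot
    have hD₀T : D₀ ∘ₗ T = φtot ∘ₗ T := by
      apply bV.ext
      intro i
      exact hD₀ (Sum.inl i)
    have hD₀T' : D₀ ∘ₗ T' = φtot ∘ₗ T' := by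
      apply bV'.ext
      intro j
      exact hD₀ (Sum.inr j)
    set Y : Submodule ℂ L := R ⊔ R' with hYdef
    have hYinv : ∀ g : G, ∀ x ∈ Y, ρ g x ∈ Y := by
      intro g x hx
      obtain ⟨r, hr, r', hr', rfl⟩ := Submodule.mem_sup.mp hx
      rw [map_add]
      exact Submodule.add_mem _ (Submodule.mem_sup_left (hRinv g r hr))
        (Submodule.mem_sup_right (hR'inv g r' hr'))
    have hφY : ∀ x ∈ Y, ∀ g : G, φtot (ρ g x) = ρ g (φtot x) := by
      intro x hx g
      obtain ⟨r, hr, r', hr', rfl⟩ := Submodule.mem_sup.mp hx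
      have e1 : φtot (ρ g r) = ρ g r := hφR _ (hRinv g r hr)
      have e2 : φtot (ρ g r') = 0 := hφR' _ (hR'inv g r' hr')
      have e3 : φtot r = r := hφR r hr
      have e4 : φtot r' = 0 := hφR' r' hr'
      simp only [map_add, e1, e2, e3, e4, add_zero]
    have hD₀Y : ∀ x ∈ Y, D₀ x = φtot x := by
      intro x hx
      obtain ⟨r, hr, r', hr', rfl⟩ := Submodule.mem_sup.mp hx
      obtain ⟨v, rfl⟩ := hr
      obtain ⟨v', rfl⟩ := hr'
      have e1 : D₀ (T v) = φtot (T v) := by simpa using LinearMap.congr_fun hD₀T v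
      have e2 : D₀ (T' v') = φtot (T' v') := by simpa using LinearMap.congr_fun hD₀T' v'
      simp only [map_add, e1, e2]
    -- the invariant correction
    set kil : Submodule ℂ (Module.End ℂ L) :=
      { carrier := {S | ∀ x ∈ Y, S x = 0}
        add_mem' := fun {S₁ S₂} hS₁ hS₂ x hx => by
          rw [LinearMap.add_apply, hS₁ x hx, hS₂ x hx, add_zero]
        zero_mem' := fun x hx => rfl
        smul_mem' := fun c S hS x hx => by
          rw [LinearMap.smul_apply, hS x hx, smul_zero] } with hkil
    set p : Submodule ℂ (Module.End ℂ L) := Subalgebra.toSubmodule A ⊓ kil with hp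
    have hpA : p ≤ Subalgebra.toSubmodule A := inf_le_left
    have hpinv : ∀ g : G, ∀ S ∈ p, conjEnd ρ g S ∈ p := by
      intro g S hS
      refine ⟨hAG g S hS.1, ?_⟩
      intro x hx
      show (ρ g ∘ₗ S ∘ₗ ρ g⁻¹) x = 0
      rw [LinearMap.comp_apply, LinearMap.comp_apply, hS.2 _ (hYinv g⁻¹ x hx), map_zero]
    obtain ⟨q, hqA, hqinv, hpq1, hpq2⟩ := hAcompred p hpA hpinv
    have hD₀mem : D₀ ∈ p ⊔ q := by rw [hpq2]; exact hD₀A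
    obtain ⟨Dp, hDp, D₁, hD₁q, hsum⟩ := Submodule.mem_sup.mp hD₀mem
    have hD₁A : D₁ ∈ A := hqA hD₁q
    have hD₁Y : ∀ x ∈ Y, D₁ x = φtot x := by
      intro x hx
      have h1 : D₀ x = Dp x + D₁ x := by rw [← hsum]; rfl
      have h2 : Dp x = 0 := hDp.2 x hx
      rw [h2, zero_add] at h1
      rw [← h1]
      exact hD₀Y x hx
    have hD₁G : ∀ g : G, conjEnd ρ g D₁ = D₁ := by
      intro g
      have hCq : conjEnd ρ g D₁ - D₁ ∈ q := Submodule.sub_mem _ (hqinv g D₁ hD₁q) hD₁q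
      have hCp : conjEnd ρ g D₁ - D₁ ∈ p := by
        constructor
        · exact Submodule.sub_mem _ (hAG g D₁ hD₁A) hD₁A
        · intro x hx
          have hx' : ρ g⁻¹ x ∈ Y := hYinv g⁻¹ x hx
          have hgg : ρ g (ρ g⁻¹ x) = x := by
            rw [← Module.End.mul_apply, ← map_mul, mul_inv_cancel, map_one,
              Module.End.one_apply]
          show (ρ g ∘ₗ D₁ ∘ₗ ρ g⁻¹) x - D₁ x = 0
          rw [LinearMap.comp_apply, LinearMap.comp_apply, hD₁Y _ hx',
            ← hφY _ hx' g, hgg, hD₁Y x hx, sub_self]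
      have : conjEnd ρ g D₁ - D₁ ∈ p ⊓ q := ⟨hCp, hCq⟩
      rw [hpq1, Submodule.mem_bot, sub_eq_zero] at this
      exact this
    -- apply the module isomorphism condition
    have hST : (Ts : V →ₗ[ℂ] L) = D₁ ∘ₗ (Ts : V →ₗ[ℂ] L) := by
      apply LinearMap.ext
      intro v
      have : T v ∈ Y := Submodule.mem_sup_left ⟨v, rfl⟩
      rw [LinearMap.comp_apply]
      show T v = D₁ (T v)
      rw [hD₁Y _ this, hφR _ ⟨v, rfl⟩]
    have hfin := he D₁ hD₁A hD₁G Ts Ts hST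
    apply hT'0
    apply LinearMap.ext
    intro v'
    have h1 : T' v' = D₁ (T' v') := by
      have := LinearMap.congr_fun hfin v'
      rw [LinearMap.comp_apply] at this
      exact this
    rw [h1, hD₁Y _ (Submodule.mem_sup_right ⟨v', rfl⟩), hφR' _ ⟨v', rfl⟩]
    rfl
  · -- W = ⊤ : range T ≤ range T', construct the isomorphism
    have hle : ∀ v : V, T v ∈ R' := by
      intro v
      have : v ∈ W := by rw [hW]; trivial
      exact this
    set eT' : V' ≃ₗ[ℂ] R' := LinearEquiv.ofInjective T' hT'inj with heT'
    set Tc : V →ₗ[ℂ] R' := T.codRestrict R' hle with hTc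
    set f : V →ₗ[ℂ] V' := eT'.symm.toLinearMap ∘ₗ Tc with hf
    have hTf : ∀ v, T' (f v) = T v := by
      intro v
      have h1 : (eT' (f v) : L) = T' (f v) := LinearEquiv.ofInjective_apply T' (f v)
      have h2 : eT' (f v) = Tc v := by
        show eT' (eT'.symm (Tc v)) = Tc v
        exact eT'.apply_symm_apply (Tc v)
      rw [← h1, h2]
      rfl
    have hfequiv : ∀ (g : G) (v : V), f (π g v) = π' g (f v) := by
      intro g v
      apply hT'inj
      rw [hTf, hTg, hT'g, hTf]
    have hf0 : f ≠ 0 := by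
      intro h
      apply hT0
      apply LinearMap.ext
      intro v
      have := hTf v
      rw [h] at this
      simpa using this.symm
    have hker : LinearMap.ker f = ⊥ := by
      have hkinv : ∀ g : G, ∀ v ∈ LinearMap.ker f, π g v ∈ LinearMap.ker f := by
        intro g v hv
        rw [LinearMap.mem_ker, hfequiv, LinearMap.mem_ker.mp hv, map_zero]
      rcases hVirr _ hkinv with h | h
      · exact h
      · exact absurd (LinearMap.ker_eq_top.mp h) hf0
    have hrange : LinearMap.range f = ⊤ := by
      have hrinv : ∀ g : G, ∀ v' ∈ LinearMap.range f, π' g v' ∈ LinearMap.range f := by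
        rintro g v' ⟨v, rfl⟩
        exact ⟨π g v, hfequiv g v⟩
      rcases hV'irr _ hrinv with h | h
      · exact absurd (LinearMap.range_eq_bot.mp h) hf0
      · exact h
    refine ⟨LinearEquiv.ofBijective f ⟨LinearMap.ker_eq_bot.mp hker,
      LinearMap.range_eq_top.mp hrange⟩, ?_⟩
    intro g v
    exact hfequiv g v
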